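/- The function q(z) = z²/((1−z)((1−z)·Log(1−z) + z)) − 1 (with Log the principal branch and q(0) := 1 as a removable singularity) satisfies the differential equation q(z) + z q'(z)/(1 + q(z)) = (1+z)/(1−z) for all z in the open unit disk where the denominators are nonzero. -/

import Mathlib

open Complex Metric

/-- The best dominant for the Libera operator: with `q(0) := 1` and otherwise
`q(z) = z²/((1−z)((1−z)Log(1−z)+z)) − 1`. -/
noncomputable def qLibera : ℂ → ℂ := fun z =>
  if z = 0 then 1 else z ^ 2 / ((1 - z) * ((1 - z) * Complex.log (1 - z) + z)) - 1

/-- `q` solves the Briot–Bouquet equation `q + z q'/(1+q) = (1+z)/(1-z)` on the unit disk,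
wherever the denominators are nonzero. -/
theorem briot_bouquet_mu_one :
    ∀ z ∈ ball (0 : ℂ) 1,
      (1 - z) * ((1 - z) * Complex.log (1 - z) + z) ≠ 0 →
      1 + qLibera z ≠ 0 →
      qLibera z + z * deriv qLibera z / (1 + qLibera z) = (1 + z) / (1 - z) := by
  intro z hz hD hq
  have h1z : (1 : ℂ) - z ≠ 0 := by
    intro h
    apply hD
    rw [h]
    ring
  by_cases hz0 : z = 0
  · subst hz0
    simp [qLibera]
  -- notation
  set L := Complex.log (1 - z) with hLdef
  have hslit : (1 : ℂ) - z ∈ Complex.slitPlane := by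
    rw [Complex.mem_slitPlane_iff]
    left
    have hb : ‖z‖ < 1 := by simpa using hz
    have : z.re < 1 := lt_of_le_of_lt (Complex.re_le_norm z) hb
    simpa using this
  have h1w : HasDerivAt (fun w : ℂ => 1 - w) (-1) z := by
    exact ((hasDerivAt_const z (1 : ℂ)).sub (hasDerivAt_id z)).congr_deriv (by ring)
  have hlog : HasDerivAt (fun w : ℂ => Complex.log (1 - w)) (-(1 - z)⁻¹) z := by
    have := (Complex.hasDerivAt_log hslit).comp z h1w
    exact this.congr_deriv (by ring)
  -- derivative of D
  set D : ℂ := (1 - z) * ((1 - z) * L + z) with hDdef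
  set D' : ℂ := -2 * (1 - z) * L - z with hD'def
  have hinner : HasDerivAt (fun w : ℂ => (1 - w) * Complex.log (1 - w) + w) (-L) z := by
    have h1 : HasDerivAt (fun w : ℂ => (1 - w) * Complex.log (1 - w))
        ((-1) * L + (1 - z) * (-(1 - z)⁻¹)) z := h1w.mul hlog
    have h2 := h1.add (hasDerivAt_id z)
    refine h2.congr_deriv ?_
    rw [mul_neg, mul_inv_cancel₀ h1z]
    ring
  have hDD : HasDerivAt (fun w : ℂ => (1 - w) * ((1 - w) * Complex.log (1 - w) + w)) D' z := by
    have h1 := h1w.mul hinner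
    refine h1.congr_deriv ?_
    rw [hD'def, hLdef]
    ring
  -- derivative of q
  have hf : HasDerivAt (fun w : ℂ => w ^ 2 / ((1 - w) * ((1 - w) * Complex.log (1 - w) + w)) - 1)
      ((2 * z * D - z ^ 2 * D') / D ^ 2) z := by
    have hnum : HasDerivAt (fun w : ℂ => w ^ 2) (2 * z) z := by
      simpa using (hasDerivAt_pow 2 z)
    have h1 := hnum.div hDD hD
    have h2 := h1.sub_const 1
    exact h2
  have hqeq : qLibera =ᶠ[nhds z]
      fun w : ℂ => w ^ 2 / ((1 - w) * ((1 - w) * Complex.log (1 - w) + w)) - 1 := by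
    filter_upwards [isOpen_compl_singleton.mem_nhds (by simpa using hz0 :
      z ∈ ({0}ᶜ : Set ℂ))] with w hw
    simp only [Set.mem_compl_iff, Set.mem_singleton_iff] at hw
    simp only [qLibera]
    rw [if_neg hw]
  have hderiv : deriv qLibera z = (2 * z * D - z ^ 2 * D') / D ^ 2 := by
    rw [hqeq.deriv_eq, hf.deriv]
  have hqz : qLibera z = z ^ 2 / D - 1 := by
    simp only [qLibera, if_neg hz0, hDdef, hLdef]
  have hq' : (1 : ℂ) + qLibera z = z ^ 2 / D := by
    rw [hqz]; ring
  rw [hqz, hderiv]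
  have hone : 1 + (z ^ 2 / D - 1) = z ^ 2 / D := by ring
  rw [hone]
  field_simp
  rw [hD'def, hDdef]
  ring
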